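/- arXiv:1006.5301 — 2 statements merged into one kernel-verified Lean document; each statement's English description precedes it below -/
import Mathlib

section
/- Let A be a hereditary artin algebra and let X be an indecomposable, finitely generated right A-module that is exceptional (i.e. Ext^1_A(X,X) = 0). Then the endomorphism ring End_A(X) is a division ring. -/
/-!
STATEMENT 0: Let `A` be a hereditary artin algebra and `X` an indecomposable, finitely
generated, exceptional (`Ext¹_A(X,X) = 0`) right `A`-module.  Then `End_A(X)` is a
division ring.

Right `A`-modules are formalized as modules over `Aᵐᵒᵖ`.
-/

universe u

/-- `Ext¹(X,Y) = 0` over the ring `A`: every short exact sequence `0 → Y → E → X → 0`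
of `A`-modules splits. -/
def Ext1Vanishes (A : Type u) [Ring A] (X : Type u) [AddCommGroup X] [Module A X]
    (Y : Type u) [AddCommGroup Y] [Module A Y] : Prop :=
  ∀ (E : ModuleCat.{u} A) (f : Y →ₗ[A] E) (g : E →ₗ[A] X),
    Function.Injective f → Function.Surjective g →
      LinearMap.range f = LinearMap.ker g →
      ∃ s : X →ₗ[A] E, g ∘ₗ s = LinearMap.id

/-- `A` is right hereditary: every submodule of a projective right `A`-module
(= `Aᵐᵒᵖ`-module) is projective. -/
def RightHereditary (A : Type u) [Ring A] : Prop :=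
  ∀ (M : ModuleCat.{u} Aᵐᵒᵖ), Module.Projective Aᵐᵒᵖ M →
    ∀ N : Submodule Aᵐᵒᵖ M, Module.Projective Aᵐᵒᵖ N

/-- A module is indecomposable: it is non-zero and has no non-trivial direct summand. -/
def IndecomposableModule (A : Type u) [Ring A] (M : Type u) [AddCommGroup M]
    [Module A M] : Prop :=
  Nontrivial M ∧ ∀ N P : Submodule A M, IsCompl N P → N = ⊥ ∨ N = ⊤

private theorem ext_factor_through_surjective {R : Type*} [Ring R] {M N P : Type*} [AddCommGroup M]
    [AddCommGroup N] [AddCommGroup P] [Module R M] [Module R N] [Module R P]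
    (p : M →ₗ[R] N) (hp : Function.Surjective p) (φ : M →ₗ[R] P)
    (h : LinearMap.ker p ≤ LinearMap.ker φ) :
    ∃ ψ : N →ₗ[R] P, ∀ x, ψ (p x) = φ x := by
  refine ⟨(LinearMap.ker p).liftQ φ h ∘ₗ (p.quotKerEquivOfSurjective hp).symm.toLinearMap,
    fun x => ?_⟩
  have h1 : (p.quotKerEquivOfSurjective hp).symm (p x) = Submodule.Quotient.mk x := by
    rw [LinearEquiv.symm_apply_eq]
    simp [LinearMap.quotKerEquivOfSurjective]
  simp [h1]

private theorem core_aux {A : Type u} [Ring A] (hA : RightHereditary A)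
    (X : Type u) [AddCommGroup X] [Module Aᵐᵒᵖ X] [Module.Finite Aᵐᵒᵖ X]
    (hexc : Ext1Vanishes Aᵐᵒᵖ X X)
    (dich : ∀ φ : Module.End Aᵐᵒᵖ X, IsNilpotent φ ∨ Function.Bijective φ)
    (g : Module.End Aᵐᵒᵖ X) (hg2 : g * g = 0) : g = 0 := by
  classical
  by_contra hg
  obtain ⟨n, π, hπ⟩ := Module.Finite.exists_fin' Aᵐᵒᵖ X
  set I : Submodule Aᵐᵒᵖ X := LinearMap.range g with hIdef
  set F' : Submodule Aᵐᵒᵖ (Fin n → Aᵐᵒᵖ) := Submodule.comap π I with hF'def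
  haveI hF'proj : Module.Projective Aᵐᵒᵖ F' :=
    hA (ModuleCat.of Aᵐᵒᵖ (Fin n → Aᵐᵒᵖ))
      (inferInstanceAs (Module.Projective Aᵐᵒᵖ (Fin n → Aᵐᵒᵖ))) F'
  set π' : F' →ₗ[Aᵐᵒᵖ] I := LinearMap.codRestrict I (π ∘ₗ F'.subtype) (fun w => w.2) with hπ'def
  have hπ'surj : Function.Surjective π' := by
    rintro ⟨y, hy⟩
    obtain ⟨v, hv⟩ := hπ y
    exact ⟨⟨v, show π v ∈ I by rw [hv]; exact hy⟩, Subtype.ext hv⟩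
  obtain ⟨lam, hlam⟩ := Module.projective_lifting_property (R := Aᵐᵒᵖ) (P := F')
    g.rangeRestrict π' g.surjective_rangeRestrict
  have hlam' : ∀ w : F', g (lam w) = π w.1 := by
    intro w
    have := LinearMap.congr_fun hlam w
    exact congrArg Subtype.val this
  have hΩF' : LinearMap.ker π ≤ F' := by
    intro v hv
    show π v ∈ I
    rw [LinearMap.mem_ker.mp hv]
    exact zero_mem I
  set ι : (LinearMap.ker π) →ₗ[Aᵐᵒᵖ] (Fin n → Aᵐᵒᵖ) × X :=
    LinearMap.prod (LinearMap.ker π).subtype (-(lam ∘ₗ Submodule.inclusion hΩF')) with hιdef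
  set W : Submodule Aᵐᵒᵖ ((Fin n → Aᵐᵒᵖ) × X) := LinearMap.range ι with hWdef
  set E := ((Fin n → Aᵐᵒᵖ) × X) ⧸ W with hEdef
  set mk : ((Fin n → Aᵐᵒᵖ) × X) →ₗ[Aᵐᵒᵖ] E := W.mkQ with hmkdef
  set α : X →ₗ[Aᵐᵒᵖ] E := mk ∘ₗ LinearMap.inr Aᵐᵒᵖ _ X with hαdef
  have hWker : W ≤ LinearMap.ker (π ∘ₗ LinearMap.fst Aᵐᵒᵖ _ X) := by
    rintro _ ⟨ω, rfl⟩
    simp only [LinearMap.mem_ker, LinearMap.coe_comp, Function.comp_apply, hιdef,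
      LinearMap.prod_apply, Pi.prod, LinearMap.fst_apply]
    exact ω.2
  set β : E →ₗ[Aᵐᵒᵖ] X := W.liftQ (π ∘ₗ LinearMap.fst Aᵐᵒᵖ _ X) hWker with hβdef
  have hβmk : ∀ p : (Fin n → Aᵐᵒᵖ) × X, β (mk p) = π p.1 := fun p => rfl
  have hαmk : ∀ x : X, α x = mk (0, x) := fun x => rfl
  have hι : ∀ ω, ι ω = ((ω : Fin n → Aᵐᵒᵖ), -lam (Submodule.inclusion hΩF' ω)) := fun ω => rfl
  have hαinj : Function.Injective α := by
    intro x y hxy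
    have h1 : ((0, x) - (0, y) : (Fin n → Aᵐᵒᵖ) × X) ∈ W := by
      rw [← Submodule.Quotient.eq]
      exact hxy
    obtain ⟨ω, hω⟩ := h1
    rw [hι] at hω
    have hω0 : ω = 0 := Subtype.ext (by simpa using congrArg Prod.fst hω)
    rw [hω0] at hω
    have hω2 := congrArg Prod.snd hω
    simp only [map_zero, neg_zero, Prod.snd_sub] at hω2
    exact (sub_eq_zero.mp (by simpa using hω2.symm))
  have hβsurj : Function.Surjective β := by
    intro x
    obtain ⟨v, hv⟩ := hπ x
    exact ⟨mk (v, 0), by rw [hβmk]; exact hv⟩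
  have hrange : LinearMap.range α = LinearMap.ker β := by
    apply le_antisymm
    · rintro _ ⟨x, rfl⟩
      rw [LinearMap.mem_ker, hαmk, hβmk]
      exact map_zero π
    · rintro e he
      obtain ⟨⟨v, x⟩, rfl⟩ := W.mkQ_surjective e
      have hv : v ∈ LinearMap.ker π := by
        rw [LinearMap.mem_ker]
        exact he
      refine ⟨x + lam (Submodule.inclusion hΩF' ⟨v, hv⟩), ?_⟩
      rw [hαmk, hmkdef, Submodule.mkQ_apply, Submodule.mkQ_apply, Submodule.Quotient.eq]
      refine ⟨-⟨v, hv⟩, ?_⟩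
      rw [hι]
      ext
      · simp
      · simp
  obtain ⟨s₀, hs⟩ := hexc (ModuleCat.of Aᵐᵒᵖ E) α β hαinj hβsurj hrange
  set s : X →ₗ[Aᵐᵒᵖ] E := s₀ with hsdef
  have hs' : ∀ x, β (s x) = x := fun x => LinearMap.congr_fun hs x
  set t : (Fin n → Aᵐᵒᵖ) →ₗ[Aᵐᵒᵖ] E := mk ∘ₗ LinearMap.inl Aᵐᵒᵖ _ X with htdef
  have htmk : ∀ v, t v = mk (v, 0) := fun v => rfl
  set d : (Fin n → Aᵐᵒᵖ) →ₗ[Aᵐᵒᵖ] E := t - s ∘ₗ π with hddef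
  have hd : ∀ v, d v ∈ LinearMap.range α := by
    intro v
    rw [hrange, LinearMap.mem_ker]
    have : β (d v) = β (t v) - β (s (π v)) := by
      simp [hddef, map_sub]
    rw [this, htmk, hβmk, hs']
    exact sub_self _
  set eα := LinearEquiv.ofInjective α hαinj with heαdef
  set μ : (Fin n → Aᵐᵒᵖ) →ₗ[Aᵐᵒᵖ] X :=
    eα.symm.toLinearMap ∘ₗ (d.codRestrict (LinearMap.range α) hd) with hμdef
  have hαμ : ∀ v, α (μ v) = d v := by
    intro v
    have h2 : eα (μ v) = ⟨d v, hd v⟩ := by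
      rw [hμdef]
      exact eα.apply_symm_apply _
    have h3 := congrArg Subtype.val h2
    rwa [LinearEquiv.ofInjective_apply] at h3
  have hμΩ : ∀ (v : Fin n → Aᵐᵒᵖ) (hv : v ∈ LinearMap.ker π),
      μ v = lam ⟨v, hΩF' hv⟩ := by
    intro v hv
    apply hαinj
    rw [hαμ]
    have h1 : d v = mk (v, 0) := by
      have : π v = 0 := LinearMap.mem_ker.mp hv
      simp [hddef, htmk, this]
    rw [h1, hαmk, hmkdef, Submodule.mkQ_apply, Submodule.mkQ_apply]
    symm
    rw [Submodule.Quotient.eq]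
    refine ⟨-⟨v, hv⟩, ?_⟩
    rw [hι]
    ext
    · simp
    · simp
      rfl
  -- e' : X →ₗ X with e' (π v) = g (μ v)
  obtain ⟨e', he'⟩ := ext_factor_through_surjective π hπ ((g : X →ₗ[Aᵐᵒᵖ] X) ∘ₗ μ) (by
    intro v hv
    rw [LinearMap.mem_ker, LinearMap.comp_apply, hμΩ v hv, hlam']
    exact LinearMap.mem_ker.mp hv)
  -- h₀ : I →ₗ X with h₀ (π' w) = μ w - lam w
  obtain ⟨h₀, hh₀⟩ := ext_factor_through_surjective π' hπ'surj (μ ∘ₗ F'.subtype - lam) (by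
    intro w hw
    have hwk : (w : Fin n → Aᵐᵒᵖ) ∈ LinearMap.ker π := by
      rw [LinearMap.mem_ker]
      have := congrArg Subtype.val hw
      exact this
    simp only [LinearMap.mem_ker, LinearMap.sub_apply, LinearMap.comp_apply,
      Submodule.subtype_apply]
    rw [hμΩ _ hwk, sub_eq_zero])
  set c : Module.End Aᵐᵒᵖ X := h₀ ∘ₗ g.rangeRestrict with hcdef
  have key : ∀ x, e' (g x) = g x + g (c x) := by
    intro x
    obtain ⟨w, hw⟩ := hπ'surj (g.rangeRestrict x)
    have hwv : π (w : Fin n → Aᵐᵒᵖ) = g x := by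
      have := congrArg Subtype.val hw
      exact this
    have h1 : e' (g x) = g (μ w) := by
      rw [← hwv, he']
      rfl
    have h2 : (μ (w : Fin n → Aᵐᵒᵖ)) = lam w + (h₀ (π' w)) := by
      rw [hh₀]
      simp
    rw [h1, h2, map_add, hlam' w, hwv]
    congr 2
    rw [hcdef, hw]
    rfl
  have hcomp : e' * g = g * (1 + c) := by
    ext x
    simp only [Module.End.mul_apply, LinearMap.add_apply, Module.End.one_apply, map_add]
    exact key x
  -- e' is not surjective, hence nilpotent
  have he'nil : IsNilpotent e' := by
    rcases dich e' with h | h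
    · exact h
    · exfalso
      have hgsurj : Function.Surjective g := by
        intro y
        obtain ⟨x, hx⟩ := h.2 y
        obtain ⟨v, rfl⟩ := hπ x
        exact ⟨μ v, by
          have h8 := he' v
          simp only [LinearMap.comp_apply] at h8
          rw [← h8]; exact hx⟩
      apply hg
      ext x
      obtain ⟨z, hz⟩ := hgsurj x
      have h4 := LinearMap.congr_fun hg2 z
      simp only [Module.End.mul_apply, LinearMap.zero_apply] at h4
      rw [LinearMap.zero_apply, ← hz]
      exact h4
  -- c is not injective, hence nilpotent
  have hcnil : IsNilpotent c := by
    rcases dich c with h | h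
    · exact h
    · exfalso
      obtain ⟨x, hx⟩ : ∃ x, g x ≠ 0 := by
        by_contra hh
        push_neg at hh
        exact hg (LinearMap.ext hh)
      have h5 : c (g x) = 0 := by
        have h6 : g (g x) = 0 := by
          have := LinearMap.congr_fun hg2 x
          simpa using this
        rw [hcdef]
        show h₀ (g.rangeRestrict (g x)) = 0
        have h7 : g.rangeRestrict (g x) = 0 := Subtype.ext (by simpa using h6)
        rw [h7, map_zero]
      exact hx (h.1 (by rw [h5, map_zero]))
  obtain ⟨N, hN⟩ := he'nil
  have hiter : ∀ m : ℕ, e' ^ m * g = g * (1 + c) ^ m := by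
    intro m
    induction m with
    | zero => simp
    | succ m ih =>
      rw [pow_succ', mul_assoc, ih, ← mul_assoc, hcomp, mul_assoc, ← pow_succ']
  have hzero : g * (1 + c) ^ N = 0 := by
    rw [← hiter, hN, zero_mul]
  have hunit : IsUnit ((1 + c) ^ N) := (hcnil.isUnit_one_add).pow N
  apply hg
  obtain ⟨u, hu⟩ := hunit
  calc g = g * ((1 + c) ^ N * ↑u⁻¹) := by rw [← hu, Units.mul_inv, mul_one]
  _ = 0 := by rw [← mul_assoc, hzero, zero_mul]

-- noetherian transfer
private theorem isNoetherian_of_isArtinian_of_jacobson_torsion (k : Type u) [CommRing k] [IsArtinianRing k]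
    (Q : Type*) [AddCommGroup Q] [Module k Q] [IsArtinian k Q]
    (hT : Module.IsTorsionBySet k Q ((Ideal.jacobson (⊥ : Ideal k) : Ideal k) : Set k)) :
    IsNoetherian k Q := by
  set J : Ideal k := Ideal.jacobson (⊥ : Ideal k) with hJ
  letI : Module (k ⧸ J) Q := hT.module
  haveI : IsScalarTower k (k ⧸ J) Q := hT.isScalarTower
  haveI : IsArtinian (k ⧸ J) Q := isArtinian_of_tower k inferInstance
  haveI : IsReduced (k ⧸ J) := (Ideal.isRadical_iff_quotient_reduced J).mp (Ideal.isRadical_jacobson ⊥)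
  haveI : IsSemisimpleRing (k ⧸ J) := IsArtinianRing.isSemisimpleRing_of_isReduced (k ⧸ J)
  haveI hss : IsSemisimpleModule (k ⧸ J) Q := inferInstance
  haveI hN : IsNoetherian (k ⧸ J) Q :=
    ((IsSemisimpleModule.finite_tfae (R := k ⧸ J) (M := Q)).out 2 1).mp
      (inferInstance : IsArtinian (k ⧸ J) Q)
  -- transfer back to k
  let e : Submodule k Q ↪o Submodule (k ⧸ J) Q :=
    { toFun := fun N =>
        { carrier := (N : Set Q)
          add_mem' := fun h1 h2 => N.add_mem h1 h2
          zero_mem' := N.zero_mem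
          smul_mem' := by
            rintro r x hx
            obtain ⟨r, rfl⟩ := Ideal.Quotient.mk_surjective r
            rw [show (Ideal.Quotient.mk J r) • x = r • x from hT.mk_smul r x]
            exact N.smul_mem r hx }
      inj' := fun N P h => by
        apply SetLike.coe_injective
        exact congrArg (fun (S : Submodule (k ⧸ J) Q) => (S : Set Q)) h
      map_rel_iff' := Iff.rfl }
  rw [isNoetherian_iff']
  haveI := hN.wellFoundedGT
  exact ⟨(e.dual.ltEmbedding).wellFounded IsWellFounded.wf⟩

private theorem isNoetherian_of_fg_of_artinian_comm (k : Type u) [CommRing k] [IsArtinianRing k]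
    (X : Type*) [AddCommGroup X] [Module k X] [Module.Finite k X] : IsNoetherian k X := by
  obtain ⟨n, hn⟩ := IsArtinianRing.isNilpotent_jacobson_bot (R := k)
  set J : Ideal k := Ideal.jacobson ⊥ with hJdef
  haveI : IsArtinian k X := isArtinian_of_fg_of_artinian'
  have step : ∀ i : ℕ, IsNoetherian k ↥(J ^ (i + 1) • (⊤ : Submodule k X)) →
      IsNoetherian k ↥(J ^ i • (⊤ : Submodule k X)) := by
    intro i ih
    set N : Submodule k X := J ^ i • ⊤ with hNdef
    set S : Submodule k ↥N := J • ⊤ with hSdef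
    haveI hT : Module.IsTorsionBySet k (↥N ⧸ S) (J : Set k) :=
      Module.isTorsionBySet_quotient_ideal_smul ↥N J
    haveI hQ : IsNoetherian k (↥N ⧸ S) := isNoetherian_of_isArtinian_of_jacobson_torsion k _ hT
    have hmap : S.map N.subtype = J ^ (i + 1) • (⊤ : Submodule k X) := by
      rw [hSdef, Submodule.map_smul'', Submodule.map_top, Submodule.range_subtype, hNdef,
        pow_succ', mul_smul]
    haveI hS : IsNoetherian k ↥S := by
      have e := Submodule.equivMapOfInjective N.subtype (Submodule.injective_subtype N) S
      rw [hmap] at e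
      exact isNoetherian_of_linearEquiv e.symm
    exact (isNoetherian_iff_submodule_quotient S).mpr ⟨hS, hQ⟩
  have all : ∀ t i, n ≤ i + t → IsNoetherian k ↥(J ^ i • (⊤ : Submodule k X)) := by
    intro t
    induction t with
    | zero =>
      intro i hi
      have hb : J ^ i = ⊥ := by
        have h1 : J ^ i ≤ J ^ n := Ideal.pow_le_pow_right (by omega)
        rw [hn] at h1
        exact le_bot_iff.mp h1
      rw [hb, Submodule.bot_smul]
      haveI : Finite ↥(⊥ : Submodule k X) := Finite.of_subsingleton
      exact isNoetherian_of_finite k _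
    | succ t ih =>
      intro i hi
      rcases le_or_gt n (i + t) with h | h
      · exact ih i h
      · exact step i (ih (i + 1) (by omega))
  have h0 := all n 0 (by omega)
  rw [pow_zero, Ideal.one_eq_top, Submodule.top_smul] at h0
  exact isNoetherian_of_linearEquiv Submodule.topEquiv

/-- The endomorphism ring of an indecomposable finitely generated exceptional module over a
hereditary artin algebra is a division ring (every non-zero endomorphism is invertible). -/
theorem endo_of_indec_exceptional_is_division_ring
    (k : Type u) [CommRing k] [IsArtinianRing k]
    (A : Type u) [Ring A] [Algebra k A] [Module.Finite k A]
    (hA : RightHereditary A)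
    (X : Type u) [AddCommGroup X] [Module Aᵐᵒᵖ X] [Module.Finite Aᵐᵒᵖ X]
    (hind : IndecomposableModule Aᵐᵒᵖ X)
    (hexc : Ext1Vanishes Aᵐᵒᵖ X X) :
    Nontrivial (Module.End Aᵐᵒᵖ X) ∧
      ∀ f : Module.End Aᵐᵒᵖ X, f ≠ 0 → IsUnit f := by
  classical
  obtain ⟨hXnt, hsum⟩ := hind
  -- finite length of `X` over `Aᵐᵒᵖ` via the artinian base ring `k`
  letI : Module k X := Module.compHom X (algebraMap k Aᵐᵒᵖ)
  haveI : IsScalarTower k Aᵐᵒᵖ X := ⟨fun a b x => by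
    show (a • b) • x = (algebraMap k Aᵐᵒᵖ a) • (b • x)
    rw [Algebra.smul_def, mul_smul]⟩
  haveI : Module.Finite k Aᵐᵒᵖ := Module.Finite.equiv (MulOpposite.opLinearEquiv k (M := A))
  haveI : Module.Finite k X := Module.Finite.trans Aᵐᵒᵖ X
  haveI : IsArtinian Aᵐᵒᵖ X := isArtinian_of_tower k isArtinian_of_fg_of_artinian'
  haveI : IsNoetherian Aᵐᵒᵖ X :=
    isNoetherian_of_tower k (isNoetherian_of_fg_of_artinian_comm k X)
  -- Fitting dichotomy
  have dich : ∀ φ : Module.End Aᵐᵒᵖ X, IsNilpotent φ ∨ Function.Bijective φ := by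
    intro φ
    obtain ⟨m, hm, hm1⟩ :=
      ((φ.eventually_isCompl_ker_pow_range_pow).and (Filter.eventually_ge_atTop 1)).exists
    rcases hsum _ _ hm with h | h
    · right
      obtain ⟨m', rfl⟩ : ∃ m', m = m' + 1 := ⟨m - 1, by omega⟩
      have hinj : Function.Injective φ := by
        rw [← LinearMap.ker_eq_bot, eq_bot_iff]
        intro x hx
        rw [← h]
        show (φ ^ (m' + 1)) x = 0
        rw [pow_succ, Module.End.mul_apply, LinearMap.mem_ker.mp hx, map_zero]
      exact ⟨hinj, IsArtinian.surjective_of_injective_endomorphism φ hinj⟩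
    · left
      exact ⟨m, LinearMap.ker_eq_top.mp h⟩
  have h10 : (1 : Module.End Aᵐᵒᵖ X) ≠ 0 := by
    intro h
    obtain ⟨x, hx⟩ := exists_ne (0 : X)
    exact hx (by simpa using LinearMap.congr_fun h x)
  refine ⟨⟨1, 0, h10⟩, fun f hf => ?_⟩
  rcases dich f with hnil | hbij
  · exfalso
    have hEx : ∃ m, f ^ m = 0 := hnil
    have hm0 : f ^ (Nat.find hEx) = 0 := Nat.find_spec hEx
    set m := Nat.find hEx with hmdef
    have hm0' : m ≠ 0 := fun h => h10 (by simpa [h] using hm0)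
    have hm1' : m ≠ 1 := fun h => hf (by simpa [h] using hm0)
    set g := f ^ (m - 1) with hgdef
    have hgne : g ≠ 0 := Nat.find_min hEx (by omega)
    have hgg : g * g = 0 := by
      have h9 : f ^ (m - 1) * f ^ (m - 1) = f ^ m * f ^ (m - 2) := by
        rw [← pow_add, ← pow_add]
        congr 1
        omega
      rw [hgdef, h9, hm0, zero_mul]
    exact hgne (core_aux hA X hexc dich g hgg)
  · exact (Module.End.isUnit_iff f).mpr hbij
end

section
/- Let R be a non-zero commutative semihereditary ring such that for every non-zero finitely generated projective R-module P, the trace of P in R equals R. Then R is an integral domain. -/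
/-!
STATEMENT 9: Let `R` be a non-zero commutative semihereditary ring such that for every
non-zero finitely generated projective `R`-module `P` the trace of `P` in `R` equals
`R`.  Then `R` is an integral domain.
-/

universe u

/-- The trace of an `R`-module `P` in `R`: the sum of the images of all
`R`-homomorphisms `P → R`. -/
def traceIn (R : Type u) [CommRing R] (P : Type u) [AddCommGroup P] [Module R P] :
    Ideal R :=
  ⨆ f : P →ₗ[R] R, LinearMap.range f

/-- A non-zero commutative semihereditary ring in which every non-zero finitely generated
projective module has full trace is a domain. -/
theorem domain_of_full_traces
    (R : Type u) [CommRing R] [Nontrivial R]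
    (hsh : ∀ I : Ideal R, I.FG → Module.Projective R ↥I)
    (htr : ∀ P : ModuleCat.{u} R, Nontrivial ↥P → Module.Finite R ↥P →
      Module.Projective R ↥P → traceIn R ↥P = ⊤) :
    IsDomain R := by

  have hnzd : ∀ a b : R, a * b = 0 → a = 0 ∨ b = 0 := by
    intro a b hab
    by_cases ha : a = 0
    · exact Or.inl ha
    right
    set I := Ideal.span {a} with hIdef
    have hfg : I.FG := ⟨{a}, by simp [hIdef]⟩
    have hproj := hsh I hfg
    have hfin : Module.Finite R ↥I := Module.Finite.iff_fg.mpr hfg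
    have hnt : Nontrivial ↥I :=
      ⟨⟨⟨a, Ideal.mem_span_singleton_self a⟩, 0,
        fun h => ha (by simpa using congrArg Subtype.val h)⟩⟩
    have htop : traceIn R ↥I = ⊤ := htr (ModuleCat.of R ↥I) hnt hfin hproj
    have key : ∀ y ∈ traceIn R ↥I, b * y = 0 := by
      intro y hy
      refine Submodule.iSup_induction (motive := fun y => b * y = 0) _ hy ?_ (by simp) ?_
      · rintro f x ⟨p, rfl⟩
        have hbp : b • p = 0 := by
          obtain ⟨r, hr⟩ := Ideal.mem_span_singleton'.mp p.2
          apply Subtype.ext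
          show b * (p : R) = 0
          have : b * (p : R) = r * (a * b) := by rw [← hr]; ring
          rw [this, hab, mul_zero]
        rw [← smul_eq_mul, ← map_smul, hbp, map_zero]
      · intro x y hx hy
        rw [mul_add, hx, hy, add_zero]
    have h1 : b * 1 = 0 := key 1 (htop ▸ Submodule.mem_top)
    simpa using h1
  haveI : NoZeroDivisors R := ⟨fun h => hnzd _ _ h⟩
  exact NoZeroDivisors.to_isDomain R
end
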